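/- Let G be a cubic graph with a 3-array of perfect matchings M = {M_1, M_2, M_3}. Then every vertex of the core of M has degree 0, 2, or 3 in the core; in particular every component of the core is either an even circuit or a subdivision of a cubic graph. -/

import Mathlib

open SimpleGraph Finset

/-- `M` is (the edge set of) a perfect matching of `G`: a set of edges of `G` such that
every vertex lies on exactly one edge of `M`. -/
def IsPerfectMatchingSet {V : Type*} (G : SimpleGraph V) (M : Finset (Sym2 V)) : Prop :=
  (↑M : Set (Sym2 V)) ⊆ G.edgeSet ∧ ∀ v : V, ∃! e, e ∈ M ∧ v ∈ e

/-- The number of matchings among `M₁, M₂, M₃` containing the edge `e`. -/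
def covCount {V : Type*} [DecidableEq V] (M₁ M₂ M₃ : Finset (Sym2 V)) (e : Sym2 V) : ℕ :=
  (if e ∈ M₁ then 1 else 0) + (if e ∈ M₂ then 1 else 0) + (if e ∈ M₃ then 1 else 0)

private lemma list_head_ne_getLast' {α : Type*} : ∀ {l : List α}, l.Nodup → 2 ≤ l.length →
    ∀ {a b : α}, l.head? = some a → l.getLast? = some b → a ≠ b := by
  intro l hnd hlen a b ha hb
  match l, hnd, hlen, ha, hb with
  | x :: y :: xs, hnd, _, ha, hb =>
    have hax : x = a := by simpa using ha
    subst hax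
    have hbmem : b ∈ y :: xs := by
      have h' : (y :: xs).getLast? = some b := by rwa [List.getLast?_cons_cons] at hb
      exact List.mem_of_getLast? h'
    intro h
    exact (List.nodup_cons.1 hnd).1 (h ▸ hbmem)

private lemma walk_head_edge {V : Type*} {H : SimpleGraph V} :
    ∀ {a b : V} (q : H.Walk a b), ¬ q.Nil →
    ∃ c, H.Adj a c ∧ q.edges.head? = some s(a, c) := by
  intro a b q hq
  cases q with
  | nil => simp at hq
  | cons h p => exact ⟨_, h, rfl⟩

/-- Let `coreG` be the core of a 3-array `{M₁, M₂, M₃}` of perfect matchings of a cubic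
graph `G`, i.e. the subgraph induced by the edges lying in 0, 2 or 3 of the matchings.
Then every vertex has degree 0, 2 or 3 in the core; in particular every component of
the core is an even circuit or a subdivision of a cubic graph (circuit components of
the core, i.e. cycles through vertices of core-degree 2, have even length). -/
theorem core_degrees_and_even_circuits
    {V : Type*} [Fintype V] [DecidableEq V]
    (G : SimpleGraph V) [DecidableRel G.Adj]
    (hcubic : ∀ v : V, G.degree v = 3)
    (M₁ M₂ M₃ : Finset (Sym2 V))
    (h₁ : IsPerfectMatchingSet G M₁) (h₂ : IsPerfectMatchingSet G M₂)
    (h₃ : IsPerfectMatchingSet G M₃)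
    (coreG : SimpleGraph V) [DecidableRel coreG.Adj]
    (hcore : ∀ u v : V, coreG.Adj u v ↔ G.Adj u v ∧ covCount M₁ M₂ M₃ s(u, v) ≠ 1) :
    (∀ v : V, coreG.degree v = 0 ∨ coreG.degree v = 2 ∨ coreG.degree v = 3) ∧
    (∀ (u : V) (p : coreG.Walk u u), p.IsCycle →
      (∀ x ∈ p.support, coreG.degree x = 2) → Even p.length) := by
  -- for each matching, each vertex has exactly one neighbor along a matching edge
  have uniq : ∀ (M : Finset (Sym2 V)), IsPerfectMatchingSet G M → ∀ x : V,
      ((G.neighborFinset x).filter (fun y => s(x, y) ∈ M)).card = 1 := by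
    intro M hM x
    obtain ⟨e, ⟨heM, hxe⟩, huniq⟩ := hM.2 x
    obtain ⟨y₀, rfl⟩ := Sym2.mem_iff_exists.1 hxe
    have hadjxy : G.Adj x y₀ := G.mem_edgeSet.1 (hM.1 heM)
    rw [Finset.card_eq_one]
    refine ⟨y₀, ?_⟩
    ext y
    simp only [Finset.mem_filter, SimpleGraph.mem_neighborFinset, Finset.mem_singleton]
    constructor
    · rintro ⟨hadj, hmem⟩
      exact Sym2.congr_right.1 (huniq s(x, y) ⟨hmem, Sym2.mem_mk_left x y⟩)
    · rintro rfl; exact ⟨hadjxy, heM⟩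
  -- the covCounts of the three edges at a vertex sum to 3
  have key_sum : ∀ x : V, (∑ y ∈ G.neighborFinset x, covCount M₁ M₂ M₃ s(x, y)) = 3 := by
    intro x
    unfold covCount
    rw [Finset.sum_add_distrib, Finset.sum_add_distrib, Finset.sum_boole, Finset.sum_boole,
      Finset.sum_boole, uniq M₁ h₁ x, uniq M₂ h₂ x, uniq M₃ h₃ x]
    simp
  have nbhd : ∀ x : V, coreG.neighborFinset x =
      (G.neighborFinset x).filter (fun y => covCount M₁ M₂ M₃ s(x, y) ≠ 1) := by
    intro x; ext y
    simp [SimpleGraph.mem_neighborFinset, hcore]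
  -- Part 1: degrees
  have deg1 : ∀ v : V, coreG.degree v = 0 ∨ coreG.degree v = 2 ∨ coreG.degree v = 3 := by
    intro v
    have hN : (G.neighborFinset v).card = 3 := hcubic v
    obtain ⟨a, b, c, hab, hac, hbc, hNeq⟩ := Finset.card_eq_three.1 hN
    have hsum := key_sum v
    have hdegv : coreG.degree v =
        ((G.neighborFinset v).filter (fun y => covCount M₁ M₂ M₃ s(v, y) ≠ 1)).card := by
      rw [← nbhd v]; rfl
    rw [hNeq] at hsum hdegv
    rw [Finset.sum_insert (by simp [hab, hac]), Finset.sum_insert (by simp [hbc]),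
      Finset.sum_singleton] at hsum
    have hcardf : ((({a, b, c} : Finset V)).filter
          (fun y => covCount M₁ M₂ M₃ s(v, y) ≠ 1)).card
        = (∑ y ∈ ({a, b, c} : Finset V),
            if covCount M₁ M₂ M₃ s(v, y) ≠ 1 then 1 else 0) := by
      rw [Finset.sum_boole]; simp
    rw [hdegv, hcardf, Finset.sum_insert (by simp [hab, hac]), Finset.sum_insert (by simp [hbc]),
      Finset.sum_singleton]
    split_ifs <;> omega
  -- Key local lemma: at a core-degree-2 vertex the two core edges have covCounts 0 and 2.
  have K1 : ∀ x y z : V, coreG.degree x = 2 → coreG.Adj x y → coreG.Adj x z → y ≠ z →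
      (covCount M₁ M₂ M₃ s(x, y) = 0 ∧ covCount M₁ M₂ M₃ s(x, z) = 2) ∨
      (covCount M₁ M₂ M₃ s(x, y) = 2 ∧ covCount M₁ M₂ M₃ s(x, z) = 0) := by
    intro x y z hdeg hy hz hyz
    have hfiltercard :
        ((G.neighborFinset x).filter (fun w => covCount M₁ M₂ M₃ s(x, w) ≠ 1)).card = 2 := by
      rw [← nbhd x]; exact hdeg
    have hymem : y ∈ (G.neighborFinset x).filter (fun w => covCount M₁ M₂ M₃ s(x, w) ≠ 1) := by
      rw [← nbhd x]; simpa using hy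
    have hzmem : z ∈ (G.neighborFinset x).filter (fun w => covCount M₁ M₂ M₃ s(x, w) ≠ 1) := by
      rw [← nbhd x]; simpa using hz
    have hsub : ({y, z} : Finset V) ⊆
        (G.neighborFinset x).filter (fun w => covCount M₁ M₂ M₃ s(x, w) ≠ 1) := by
      intro w hw
      rcases Finset.mem_insert.1 hw with rfl | hw
      · exact hymem
      · rw [Finset.mem_singleton] at hw; subst hw; exact hzmem
    have heq : ({y, z} : Finset V) =
        (G.neighborFinset x).filter (fun w => covCount M₁ M₂ M₃ s(x, w) ≠ 1) :=
      Finset.eq_of_subset_of_card_le hsub (by rw [hfiltercard, Finset.card_pair hyz])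
    have hsplit := Finset.sum_filter_add_sum_filter_not (G.neighborFinset x)
      (fun w => covCount M₁ M₂ M₃ s(x, w) ≠ 1) (fun w => covCount M₁ M₂ M₃ s(x, w))
    have hones : (∑ w ∈ (G.neighborFinset x).filter
          (fun w => ¬ covCount M₁ M₂ M₃ s(x, w) ≠ 1), covCount M₁ M₂ M₃ s(x, w))
        = ((G.neighborFinset x).filter (fun w => ¬ covCount M₁ M₂ M₃ s(x, w) ≠ 1)).card := by
      rw [Finset.card_eq_sum_ones]
      refine Finset.sum_congr rfl (fun w hw => ?_)
      have := (Finset.mem_filter.1 hw).2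
      omega
    have hcards := Finset.card_filter_add_card_filter_not
      (s := G.neighborFinset x) (fun w => covCount M₁ M₂ M₃ s(x, w) ≠ 1)
    have hN : (G.neighborFinset x).card = 3 := hcubic x
    have hsum := key_sum x
    have h2 : (∑ w ∈ (G.neighborFinset x).filter
        (fun w => covCount M₁ M₂ M₃ s(x, w) ≠ 1), covCount M₁ M₂ M₃ s(x, w)) = 2 := by
      omega
    rw [← heq, Finset.sum_pair hyz] at h2
    have hy1 : covCount M₁ M₂ M₃ s(x, y) ≠ 1 := ((hcore x y).1 hy).2
    have hz1 : covCount M₁ M₂ M₃ s(x, z) ≠ 1 := ((hcore x z).1 hz).2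
    omega
  have K0 : ∀ x y : V, coreG.degree x = 2 → coreG.Adj x y →
      covCount M₁ M₂ M₃ s(x, y) = 0 ∨ covCount M₁ M₂ M₃ s(x, y) = 2 := by
    intro x y hdeg hy
    have hcard : (coreG.neighborFinset x).card = 2 := hdeg
    have hymem : y ∈ coreG.neighborFinset x := by simpa using hy
    have hne : ((coreG.neighborFinset x).erase y).Nonempty := by
      rw [← Finset.card_pos, Finset.card_erase_of_mem hymem, hcard]
      omega
    obtain ⟨z, hz⟩ := hne
    have hzy : z ≠ y := Finset.ne_of_mem_erase hz
    have hzadj : coreG.Adj x z := by simpa using Finset.mem_of_mem_erase hz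
    rcases K1 x y z hdeg hy hzadj hzy.symm with ⟨h, _⟩ | ⟨h, _⟩
    · exact Or.inl h
    · exact Or.inr h
  -- every edge of a walk through degree-2 vertices has covCount 0 or 2
  have edge02 : ∀ {a b : V} (q : coreG.Walk a b), (∀ x ∈ q.support, coreG.degree x = 2) →
      ∀ e ∈ q.edges, covCount M₁ M₂ M₃ e = 0 ∨ covCount M₁ M₂ M₃ e = 2 := by
    intro a b q hdeg e he
    induction e using Sym2.ind with
    | _ x y =>
      have hadj : coreG.Adj x y := coreG.mem_edgeSet.1 (q.edges_subset_edgeSet he)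
      have hx : x ∈ q.support := q.fst_mem_support_of_mem_edges he
      exact K0 x y (hdeg x hx) hadj
  -- alternation lemma
  have alt : ∀ {a b : V} (q : coreG.Walk a b), q.edges.Nodup →
      (∀ x ∈ q.support, coreG.degree x = 2) →
      ∀ e₁ e₂, q.edges.head? = some e₁ → q.edges.getLast? = some e₂ →
      (Even q.length ↔ covCount M₁ M₂ M₃ e₁ ≠ covCount M₁ M₂ M₃ e₂) := by
    intro a b q
    induction q with
    | nil => intro _ _ e₁ e₂ h1 _; simp at h1
    | @cons u v w h p ih =>
      intro hnd hdeg e₁ e₂ hh hl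
      have he₁ : e₁ = s(u, v) := by
        simpa [Walk.edges_cons] using hh.symm
      subst he₁
      by_cases hp : p.Nil
      · have hlen0 : p.length = 0 := Walk.nil_iff_length_eq.1 hp
        have hpe : p.edges = [] := List.length_eq_zero_iff.1 (by rw [Walk.length_edges, hlen0])
        have he₂ : e₂ = s(u, v) := by
          rw [Walk.edges_cons, hpe] at hl
          simpa using hl.symm
        subst he₂
        simp [hlen0]
      · obtain ⟨y, hyadj, hyhead⟩ := walk_head_edge p hp
        have hpe_ne : p.edges ≠ [] := by
          intro h'
          rw [h'] at hyhead
          simp at hyhead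
        have hgl : p.edges.getLast? = some e₂ := by
          cases hpe : p.edges with
          | nil => exact absurd hpe hpe_ne
          | cons e' l' =>
            rw [Walk.edges_cons, hpe, List.getLast?_cons_cons] at hl
            exact hl
        have hnd' : p.edges.Nodup := by
          rw [Walk.edges_cons] at hnd
          exact (List.nodup_cons.1 hnd).2
        have hdeg' : ∀ x ∈ p.support, coreG.degree x = 2 := by
          intro x hx
          exact hdeg x (by rw [Walk.support_cons]; exact List.mem_cons_of_mem _ hx)
        have IH := ih hnd' hdeg' s(v, y) e₂ hyhead hgl
        -- s(u,v) is not an edge of p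
        have huv_notin : s(u, v) ∉ p.edges := by
          rw [Walk.edges_cons] at hnd
          exact (List.nodup_cons.1 hnd).1
        have hvy_in : s(v, y) ∈ p.edges :=
          List.mem_of_mem_head? (by rw [hyhead]; rfl)
        have huy : u ≠ y := by
          intro h'
          subst h'
          exact huv_notin (by rwa [Sym2.eq_swap] at hvy_in)
        have hvdeg : coreG.degree v = 2 := hdeg v (by simp [Walk.support_cons])
        have hK := K1 v u y hvdeg h.symm hyadj huy
        have hE2 : covCount M₁ M₂ M₃ e₂ = 0 ∨ covCount M₁ M₂ M₃ e₂ = 2 :=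
          edge02 p hdeg' e₂ (List.mem_of_getLast? hgl)
        have hswap : s(u, v) = s(v, u) := Sym2.eq_swap
        rw [Walk.length_cons, Nat.even_add_one, IH, hswap]
        rcases hK with ⟨h0, h2'⟩ | ⟨h0, h2'⟩ <;> rcases hE2 with hE | hE <;> omega
  refine ⟨deg1, ?_⟩
  intro u p hcyc hdeg
  have hnd := hcyc.edges_nodup
  have hlen : 3 ≤ p.length := hcyc.three_le_length
  have hnotnil : ¬ p.Nil := by rw [Walk.nil_iff_length_eq]; omega
  obtain ⟨v₁, h1adj, h1head⟩ := walk_head_edge p hnotnil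
  have hnr : ¬ p.reverse.Nil := by rw [Walk.nil_iff_length_eq, Walk.length_reverse]; omega
  obtain ⟨v₂, h2adj, h2head⟩ := walk_head_edge p.reverse hnr
  have h2last : p.edges.getLast? = some s(u, v₂) := by
    rw [← List.head?_reverse, ← Walk.edges_reverse]; exact h2head
  have hlen2 : 2 ≤ p.edges.length := by rw [Walk.length_edges]; omega
  have hne : s(u, v₁) ≠ s(u, v₂) := list_head_ne_getLast' hnd hlen2 h1head h2last
  have hv : v₁ ≠ v₂ := fun hv => hne (by rw [hv])
  have hudeg : coreG.degree u = 2 := hdeg u p.start_mem_support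
  have hK := K1 u v₁ v₂ hudeg h1adj h2adj hv
  rw [alt p hnd hdeg _ _ h1head h2last]
  rcases hK with ⟨h0, h2'⟩ | ⟨h0, h2'⟩ <;> omega
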